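/- Let ρ > 0, let W♮ ∈ ℝ^{L×K} be entrywise nonnegative with every column summing to ρ, rank(W♮) = K, and (W♮)^T satisfying the SSC, and let F♮ ∈ ℝ^{K×N} with rank(F♮) = K. Set P = W♮·F♮. Call a pair (W,F) feasible if W ∈ ℝ^{L×K} is entrywise nonnegative with every column summing to ρ, F ∈ ℝ^{K×N}, and W·F = P. If (W*,F*) is feasible and det((W*)^T·W*) ≥ det(W^T·W) for every feasible (W,F), then there exists a permutation matrix Π ∈ ℝ^{K×K} such that W* = W♮·Π and F* = Π^T·F♮. -/

import Mathlib

open Matrix BigOperators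

/-- Euclidean norm of a real vector. -/
noncomputable def l2norm {m : Type*} [Fintype m] (x : m → ℝ) : ℝ :=
  Real.sqrt (∑ i, (x i) ^ 2)

/-- `P` is a permutation matrix. -/
def IsPermMatrix {K : ℕ} (P : Matrix (Fin K) (Fin K) ℝ) : Prop :=
  ∃ σ : Equiv.Perm (Fin K), ∀ i j, P i j = if σ i = j then 1 else 0

/-- The conic hull of the columns of `H`. -/
def coneOf {K : ℕ} {J : Type*} [Fintype J] (H : Matrix (Fin K) J ℝ) : Set (Fin K → ℝ) :=
  {x | ∃ θ : J → ℝ, (∀ j, 0 ≤ θ j) ∧ x = H.mulVec θ}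

/-- The second-order cone `C = {x : √(K-1) ‖x‖₂ ≤ ∑ᵢ xᵢ}`. -/
def socC (K : ℕ) : Set (Fin K → ℝ) :=
  {x | Real.sqrt ((K : ℝ) - 1) * l2norm x ≤ ∑ i, x i}

/-- The sufficiently scattered condition. -/
def SSC {K : ℕ} {J : Type*} [Fintype J] (H : Matrix (Fin K) J ℝ) : Prop :=
  socC K ⊆ coneOf H ∧
  ∀ Q : Matrix (Fin K) (Fin K) ℝ, Qᵀ * Q = 1 → ¬ IsPermMatrix Q → ¬ (coneOf H ⊆ coneOf Q)

lemma aux_isUnit_det {n : ℕ} (M : Matrix (Fin n) (Fin n) ℝ) (h : M.rank = n) :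
    IsUnit M.det := by
  have hsurj : Function.Surjective M.mulVecLin := by
    rw [← LinearMap.range_eq_top]
    apply Submodule.eq_top_of_finrank_eq
    simpa [Matrix.rank] using h
  have hinj : Function.Injective M.mulVecLin :=
    (LinearMap.injective_iff_surjective).2 hsurj
  rw [isUnit_iff_ne_zero]
  intro hdet
  obtain ⟨v, hv, hv0⟩ := (Matrix.exists_mulVec_eq_zero_iff).2 hdet
  exact hv (hinj (by simpa using hv0))

lemma aux_psd_eq_one {n : ℕ} (M : Matrix (Fin n) (Fin n) ℝ) (hM : M.PosSemidef)
    (hdet : 1 ≤ M.det) (htr : M.trace ≤ n) : M = 1 := by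
  have hherm := hM.1
  set lam := hherm.eigenvalues with hlam
  have hnn : ∀ i, 0 ≤ lam i := hM.eigenvalues_nonneg
  have hdet' : M.det = ∏ i, lam i := by simpa using hherm.det_eq_prod_eigenvalues
  have htr' : M.trace = ∑ i, lam i := by
    conv_lhs => rw [hherm.spectral_theorem, Unitary.conjStarAlgAut_apply]
    rw [Matrix.trace_mul_comm, ← mul_assoc]
    simp [Matrix.trace_diagonal, hlam]
  have hpos : ∀ i, 0 < lam i := by
    intro i
    rcases lt_or_eq_of_le (hnn i) with h | h
    · exact h
    · exfalso
      have : M.det = 0 := by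
        rw [hdet']; exact Finset.prod_eq_zero (Finset.mem_univ i) h.symm
      linarith
  have hall : ∀ i, lam i = 1 := by
    by_contra hcon
    push_neg at hcon
    obtain ⟨j, hj⟩ := hcon
    have hstrict : lam j < Real.exp (lam j - 1) := by
      have := Real.add_one_lt_exp (x := lam j - 1) (by intro h; apply hj; linarith)
      linarith
    have hprodlt : ∏ i, lam i < ∏ i, Real.exp (lam i - 1) := by
      apply Finset.prod_lt_prod (fun i _ => hpos i) (fun i _ => ?_)
        ⟨j, Finset.mem_univ j, hstrict⟩
      have := Real.add_one_le_exp (lam i - 1); linarith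
    have hexp : ∏ i, Real.exp (lam i - 1) = Real.exp (∑ i, (lam i - 1)) := by
      rw [Real.exp_sum]
    have hsum : ∑ i, (lam i - 1) ≤ 0 := by
      rw [Finset.sum_sub_distrib]
      simp only [Finset.sum_const, Finset.card_univ, Fintype.card_fin, nsmul_eq_mul, mul_one]
      have := htr' ▸ htr
      linarith
    have h1 : (1:ℝ) < Real.exp (∑ i, (lam i - 1)) := by
      calc (1:ℝ) ≤ M.det := hdet
        _ = ∏ i, lam i := hdet'
        _ < _ := hexp ▸ hprodlt
    have h2 : Real.exp (∑ i, (lam i - 1)) ≤ 1 := Real.exp_le_one_iff.mpr hsum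
    linarith
  have hdiag : Matrix.diagonal (RCLike.ofReal ∘ lam) = (1 : Matrix (Fin n) (Fin n) ℝ) := by
    have h1 : (RCLike.ofReal ∘ lam : Fin n → ℝ) = fun _ => 1 := by
      funext i; simp [hall i]
    rw [h1, Matrix.diagonal_one]
  have hsp := hherm.spectral_theorem
  rw [hdiag, map_one] at hsp
  exact hsp

lemma aux_dual_bound {K : ℕ} (hK : 0 < K) (y : Fin K → ℝ) (hsum : ∑ j, y j = 1)
    (hdual : ∀ x ∈ socC K, 0 ≤ ∑ j, x j * y j) : ∑ j, y j ^ 2 ≤ 1 := by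
  set Kr : ℝ := (K : ℝ) with hKrdef
  have hKr : 0 < Kr := Nat.cast_pos.mpr hK
  have hKr1 : 1 ≤ Kr := Nat.one_le_cast.mpr hK
  set yb : Fin K → ℝ := fun j => y j - 1 / Kr with hyb
  set S : ℝ := ∑ j, yb j ^ 2 with hS
  have hS0 : 0 ≤ S := Finset.sum_nonneg fun j _ => sq_nonneg _
  have hybsum : ∑ j, yb j = 0 := by
    simp only [hyb, Finset.sum_sub_distrib, hsum, Finset.sum_const, Finset.card_univ,
      Fintype.card_fin, nsmul_eq_mul]
    field_simp
    rw [hKrdef]; ring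
  set c : ℝ := Real.sqrt ((Kr - 1) * S / Kr) with hc
  have hc0 : 0 ≤ c := Real.sqrt_nonneg _
  have hargnn : 0 ≤ (Kr - 1) * S / Kr := div_nonneg (mul_nonneg (by linarith) hS0) hKr.le
  have hc2 : c ^ 2 = (Kr - 1) * S / Kr := Real.sq_sqrt hargnn
  set x : Fin K → ℝ := fun j => c - yb j with hx
  have hxsum : ∑ j, x j = Kr * c := by
    simp only [hx, Finset.sum_sub_distrib, hybsum, Finset.sum_const, Finset.card_univ,
      Fintype.card_fin, nsmul_eq_mul]
    ring
  have hxsq : ∑ j, x j ^ 2 = Kr * c ^ 2 + S := by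
    have : ∀ j, x j ^ 2 = c ^ 2 - 2 * c * yb j + yb j ^ 2 := fun j => by
      simp only [hx]; ring
    simp only [this, Finset.sum_add_distrib, Finset.sum_sub_distrib, ← Finset.mul_sum, hybsum,
      Finset.sum_const, Finset.card_univ, Fintype.card_fin, nsmul_eq_mul]
    ring
  have hmem : x ∈ socC K := by
    show Real.sqrt (Kr - 1) * l2norm x ≤ ∑ j, x j
    rw [hxsum, l2norm, hxsq, ← Real.sqrt_mul (by linarith : (0:ℝ) ≤ Kr - 1)]
    have hKc : Kr * c = Real.sqrt (Kr ^ 2 * ((Kr - 1) * S / Kr)) := by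
      rw [Real.sqrt_mul (sq_nonneg _), Real.sqrt_sq hKr.le]
    rw [hKc]
    apply le_of_eq
    congr 1
    rw [hc2]
    field_simp
    ring
  have hdx := hdual x hmem
  have hxy : ∑ j, x j * y j = c - S := by
    have h1 : ∀ j, x j * y j = c * y j - (yb j ^ 2 + yb j * (1 / Kr)) := fun j => by
      simp only [hx, hyb]; ring
    simp only [h1, Finset.sum_sub_distrib, Finset.sum_add_distrib, ← Finset.mul_sum,
      ← Finset.sum_mul, hybsum, hsum]
    ring
  have hSc : S ≤ c := by rw [hxy] at hdx; linarith
  have hS2 : S ^ 2 ≤ (Kr - 1) * S / Kr := by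
    calc S ^ 2 ≤ c ^ 2 := by apply pow_le_pow_left₀ hS0 hSc
      _ = _ := hc2
  have hS2' : S ^ 2 * Kr ≤ (Kr - 1) * S := by
    rw [le_div_iff₀ hKr] at hS2; linarith
  have hy2 : ∑ j, y j ^ 2 = S + 1 / Kr := by
    have h1 : ∀ j, y j ^ 2 = yb j ^ 2 + 2 * (1 / Kr) * yb j + (1 / Kr) ^ 2 := fun j => by
      simp only [hyb]; ring
    simp only [h1, Finset.sum_add_distrib, ← Finset.mul_sum, hybsum, Finset.sum_const,
      Finset.card_univ, Fintype.card_fin, nsmul_eq_mul]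
    field_simp
    rw [← hS, ← hKrdef]
    ring
  rw [hy2]
  rcases eq_or_lt_of_le hS0 with h | h
  · rw [← h]
    have h1K : 1 / Kr ≤ 1 := by rw [div_le_one hKr]; linarith
    linarith
  · have hKS : S * Kr ≤ Kr - 1 := by nlinarith
    have h1K : 1 / Kr * Kr = 1 := by field_simp
    nlinarith

lemma aux_psd_det_nonneg {n : ℕ} (M : Matrix (Fin n) (Fin n) ℝ) (hM : M.PosSemidef) :
    0 ≤ M.det := by
  have hherm := hM.1
  have hdet' : M.det = ∏ i, hherm.eigenvalues i := by simpa using hherm.det_eq_prod_eigenvalues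
  rw [hdet']
  exact Finset.prod_nonneg fun i _ => hM.eigenvalues_nonneg i

theorem stmt8 {L N K : ℕ} (ρ : ℝ) (hρ : 0 < ρ)
    (Wn : Matrix (Fin L) (Fin K) ℝ) (Fn : Matrix (Fin K) (Fin N) ℝ)
    (hWn0 : ∀ i k, 0 ≤ Wn i k) (hWn1 : ∀ k, ∑ i, Wn i k = ρ)
    (hWnrank : Wn.rank = K) (hWnssc : SSC Wnᵀ)
    (hFnrank : Fn.rank = K)
    (Wstar : Matrix (Fin L) (Fin K) ℝ) (Fstar : Matrix (Fin K) (Fin N) ℝ)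
    (hWstar0 : ∀ i k, 0 ≤ Wstar i k) (hWstar1 : ∀ k, ∑ i, Wstar i k = ρ)
    (hfeas : Wstar * Fstar = Wn * Fn)
    (hopt : ∀ (W : Matrix (Fin L) (Fin K) ℝ) (F : Matrix (Fin K) (Fin N) ℝ),
      (∀ i k, 0 ≤ W i k) → (∀ k, ∑ i, W i k = ρ) → W * F = Wn * Fn →
      (Wᵀ * W).det ≤ (Wstarᵀ * Wstar).det) :
    ∃ Pm : Matrix (Fin K) (Fin K) ℝ,
      IsPermMatrix Pm ∧ Wstar = Wn * Pm ∧ Fstar = Pmᵀ * Fn := by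
  by_cases hK0 : K = 0
  · refine ⟨1, ⟨Equiv.refl _, fun i j => by simp [Matrix.one_apply, eq_comm]; split_ifs <;> simp_all⟩, ?_, ?_⟩
    · ext i j
      exact absurd j.isLt (by omega)
    · ext i j
      exact absurd i.isLt (by omega)
  have hK : 0 < K := Nat.pos_of_ne_zero hK0
  -- Wn has full column rank: cancellation
  have hWnU : IsUnit (Wnᵀ * Wn).det :=
    aux_isUnit_det _ (by rw [Matrix.rank_transpose_mul_self]; exact hWnrank)
  have hcancel : ∀ {m : ℕ} (X Y : Matrix (Fin K) (Fin m) ℝ), Wn * X = Wn * Y → X = Y := by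
    intro m X Y h
    have h2 : (Wnᵀ * Wn) * X = (Wnᵀ * Wn) * Y := by
      rw [Matrix.mul_assoc, Matrix.mul_assoc, h]
    have h3 := congrArg (fun Z => (Wnᵀ * Wn)⁻¹ * Z) h2
    simpa only [← Matrix.mul_assoc, Matrix.nonsing_inv_mul _ hWnU, Matrix.one_mul] using h3
  -- Fn has a right inverse
  have hFnU : IsUnit (Fn * Fnᵀ).det :=
    aux_isUnit_det _ (by rw [Matrix.rank_self_mul_transpose]; exact hFnrank)
  set G : Matrix (Fin N) (Fin K) ℝ := Fnᵀ * (Fn * Fnᵀ)⁻¹ with hG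
  have hFnG : Fn * G = 1 := by
    rw [hG, ← Matrix.mul_assoc, Matrix.mul_nonsing_inv _ hFnU]
  -- rank of the product
  have hWnFn : (Wn * Fn) * G = Wn := by rw [Matrix.mul_assoc, hFnG, Matrix.mul_one]
  have hPrank : (Wn * Fn).rank = K := by
    apply le_antisymm
    · exact le_trans (Matrix.rank_mul_le_left Wn Fn) (le_of_eq hWnrank)
    · calc K = Wn.rank := hWnrank.symm
        _ = ((Wn * Fn) * G).rank := by rw [hWnFn]
        _ ≤ (Wn * Fn).rank := Matrix.rank_mul_le_left _ _
  -- Fstar has full row rank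
  have hFsrank : Fstar.rank = K := by
    apply le_antisymm
    · exact le_trans Fstar.rank_le_card_height (le_of_eq (Fintype.card_fin K))
    · calc K = (Wn * Fn).rank := hPrank.symm
        _ = (Wstar * Fstar).rank := by rw [hfeas]
        _ ≤ Fstar.rank := Matrix.rank_mul_le_right _ _
  have hFsU : IsUnit (Fstar * Fstarᵀ).det :=
    aux_isUnit_det _ (by rw [Matrix.rank_self_mul_transpose]; exact hFsrank)
  set G' : Matrix (Fin N) (Fin K) ℝ := Fstarᵀ * (Fstar * Fstarᵀ)⁻¹ with hG'
  have hFsG : Fstar * G' = 1 := by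
    rw [hG', ← Matrix.mul_assoc, Matrix.mul_nonsing_inv _ hFsU]
  set A : Matrix (Fin K) (Fin K) ℝ := Fn * G' with hA
  have hWA : Wstar = Wn * A := by
    calc Wstar = Wstar * 1 := (Matrix.mul_one _).symm
      _ = Wstar * (Fstar * G') := by rw [hFsG]
      _ = (Wstar * Fstar) * G' := by rw [Matrix.mul_assoc]
      _ = (Wn * Fn) * G' := by rw [hfeas]
      _ = Wn * A := by rw [Matrix.mul_assoc, hA]
  -- column sums of A are 1
  have hA1 : ∀ k, ∑ j, A j k = 1 := by
    intro k
    have h1 : ∑ i, (Wn * A) i k = ρ := by rw [← hWA]; exact hWstar1 k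
    have h2 : ∑ i, (Wn * A) i k = ρ * ∑ j, A j k := by
      simp only [Matrix.mul_apply]
      rw [Finset.sum_comm]
      rw [Finset.mul_sum]
      apply Finset.sum_congr rfl
      intro j _
      rw [← Finset.sum_mul, hWn1 j]
    rw [h2] at h1
    have h3 : ρ * ∑ j, A j k = ρ * 1 := by rw [mul_one]; exact h1
    exact mul_left_cancel₀ (ne_of_gt hρ) h3
  have hWA0 : ∀ i k, 0 ≤ (Wn * A) i k := fun i k => hWA ▸ hWstar0 i k
  -- key computation for dual pairing
  have hkey : ∀ (θ : Fin L → ℝ) (k : Fin K),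
      ∑ j, (Wnᵀ.mulVec θ) j * A j k = ∑ i, θ i * (Wn * A) i k := by
    intro θ k
    simp only [Matrix.mulVec, dotProduct, Matrix.transpose_apply, Matrix.mul_apply,
      Finset.sum_mul, Finset.mul_sum]
    rw [Finset.sum_comm]
    apply Finset.sum_congr rfl
    intro i _
    apply Finset.sum_congr rfl
    intro j _
    ring
  -- columns of A have norm at most 1
  have hcolbound : ∀ k, ∑ j, A j k ^ 2 ≤ 1 := by
    intro k
    apply aux_dual_bound hK _ (hA1 k)
    intro x hx
    obtain ⟨θ, hθ, rfl⟩ := hWnssc.1 hx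
    rw [hkey θ k]
    exact Finset.sum_nonneg fun i _ => mul_nonneg (hθ i) (hWA0 i k)
  -- determinant inequality
  have hpsdWn : (Wnᵀ * Wn).PosSemidef := by
    simpa using Matrix.posSemidef_conjTranspose_mul_self Wn
  have hdet0 : 0 < (Wnᵀ * Wn).det := by
    rcases lt_or_eq_of_le (aux_psd_det_nonneg _ hpsdWn) with h | h
    · exact h
    · exact absurd h.symm (IsUnit.ne_zero hWnU)
  have hWsdet : (Wstarᵀ * Wstar).det = A.det ^ 2 * (Wnᵀ * Wn).det := by
    rw [hWA, Matrix.transpose_mul]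
    have : Aᵀ * Wnᵀ * (Wn * A) = Aᵀ * ((Wnᵀ * Wn) * A) := by
      rw [Matrix.mul_assoc, Matrix.mul_assoc]
    rw [this, Matrix.det_mul, Matrix.det_mul, Matrix.det_transpose]
    ring
  have hub := hopt Wn Fn hWn0 hWn1 rfl
  have hdetA2 : 1 ≤ A.det ^ 2 := by
    rw [hWsdet] at hub
    nlinarith
  -- A is orthogonal
  have hMpsd : (Aᵀ * A).PosSemidef := by
    simpa using Matrix.posSemidef_conjTranspose_mul_self A
  have hMdet : 1 ≤ (Aᵀ * A).det := by
    rw [Matrix.det_mul, Matrix.det_transpose]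
    nlinarith
  have hMtr : (Aᵀ * A).trace ≤ K := by
    rw [Matrix.trace]
    have h1 : ∀ k, (Aᵀ * A).diag k = ∑ j, A j k ^ 2 := by
      intro k
      simp only [Matrix.diag_apply, Matrix.mul_apply, Matrix.transpose_apply, sq]
    calc ∑ k, (Aᵀ * A).diag k = ∑ k : Fin K, ∑ j, A j k ^ 2 := by
          apply Finset.sum_congr rfl; intro k _; exact h1 k
      _ ≤ ∑ _k : Fin K, (1:ℝ) := Finset.sum_le_sum fun k _ => hcolbound k
      _ = K := by simp
  have hAorth : Aᵀ * A = 1 := aux_psd_eq_one _ hMpsd hMdet hMtr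
  have hAorth' : A * Aᵀ = 1 := mul_eq_one_comm.mp hAorth
  -- SSC implies A is a permutation matrix
  have hsub : coneOf Wnᵀ ⊆ coneOf A := by
    rintro x ⟨θ, hθ, rfl⟩
    refine ⟨Aᵀ.mulVec (Wnᵀ.mulVec θ), fun k => ?_, ?_⟩
    · have : Aᵀ.mulVec (Wnᵀ.mulVec θ) k = ∑ j, (Wnᵀ.mulVec θ) j * A j k := by
        simp only [Matrix.mulVec, dotProduct, Matrix.transpose_apply]
        apply Finset.sum_congr rfl
        intro j _
        ring
      rw [this, hkey θ k]
      exact Finset.sum_nonneg fun i _ => mul_nonneg (hθ i) (hWA0 i k)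
    · rw [Matrix.mulVec_mulVec, hAorth', Matrix.one_mulVec]
  have hperm : IsPermMatrix A := by
    by_contra hnp
    exact hWnssc.2 A hAorth hnp hsub
  -- conclude
  have hAF : A * Fstar = Fn := by
    apply hcancel
    calc Wn * (A * Fstar) = (Wn * A) * Fstar := (Matrix.mul_assoc Wn A Fstar).symm
      _ = Wstar * Fstar := by rw [← hWA]
      _ = Wn * Fn := hfeas
  have hFs : Fstar = Aᵀ * Fn := by
    have h4 : (Aᵀ * A) * Fstar = Aᵀ * Fn := by rw [Matrix.mul_assoc, hAF]
    rw [hAorth, Matrix.one_mul] at h4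
    exact h4 ▸ rfl
  exact ⟨A, hperm, hWA, hFs⟩
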